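/- Let K be a field and F the free associative K-algebra on x_1, x_2 (each appearing in relations only in degree ≥ 2 terms), and let I be the two-sided ideal generated by two elements f_1, f_2 ∈ F each of which is a sum of words of degree two or higher. If F/I is finite dimensional over K, then F/I is not commutative. -/

import Mathlib

/-- The subspace of the free algebra on `n` generators spanned by words of degree
two or higher. -/
noncomputable def degGe2 (K : Type*) [Field K] (n : ℕ) : Submodule K (FreeAlgebra K (Fin n)) :=
  ⨆ k : ℕ, (Submodule.span K (Set.range (FreeAlgebra.ι K))) ^ (k + 2)

/-- The two-sided ideal of the free algebra generated by a set `S`. -/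
noncomputable def idealGen (K : Type*) [Field K] (n : ℕ) (S : Set (FreeAlgebra K (Fin n))) :
    Submodule K (FreeAlgebra K (Fin n)) :=
  Submodule.span K {x : FreeAlgebra K (Fin n) |
    ∃ a s b : FreeAlgebra K (Fin n), s ∈ S ∧ x = a * s * b}

namespace DWaux

variable (K : Type*) [Field K]

/-- The span of the generators. -/
noncomputable def V : Submodule K (FreeAlgebra K (Fin 2)) :=
  Submodule.span K (Set.range (FreeAlgebra.ι K))

/-- Degree `≥ n` part. -/
noncomputable def Dn (n : ℕ) : Submodule K (FreeAlgebra K (Fin 2)) :=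
  ⨆ k : ℕ, V K ^ (k + n)

variable {K}

lemma pow_le_Dn {m n : ℕ} (h : n ≤ m) : V K ^ m ≤ Dn K n := by
  have : m = (m - n) + n := by omega
  rw [this]
  exact le_iSup (fun k : ℕ => V K ^ (k + n)) (m - n)

lemma mul_mem_Dn {m n : ℕ} {x y : FreeAlgebra K (Fin 2)} (hx : x ∈ Dn K m) (hy : y ∈ Dn K n) :
    x * y ∈ Dn K (m + n) := by
  refine Submodule.iSup_induction (motive := fun z => z * y ∈ Dn K (m+n)) _ hx ?_ (by simp) ?_
  · intro i z hz
    refine Submodule.iSup_induction (motive := fun w => z * w ∈ Dn K (m+n)) _ hy ?_ (by simp) ?_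
    · intro j w hw
      have : z * w ∈ V K ^ (i + m) * V K ^ (j + n) := Submodule.mul_mem_mul hz hw
      rw [← pow_add] at this
      exact pow_le_Dn (by omega) this
    · intro a b ha hb
      rw [mul_add]; exact Submodule.add_mem _ ha hb
  · intro a b ha hb
    rw [add_mul]; exact Submodule.add_mem _ ha hb

lemma mem_Dn_zero (x : FreeAlgebra K (Fin 2)) : x ∈ Dn K 0 := by
  induction x using FreeAlgebra.induction with
  | grade0 r =>
      have h1 : (algebraMap K (FreeAlgebra K (Fin 2))) r ∈ (V K) ^ 0 := by
        rw [pow_zero, Submodule.one_eq_span, Algebra.algebraMap_eq_smul_one]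
        exact Submodule.smul_mem _ _ (Submodule.subset_span rfl)
      exact pow_le_Dn (le_refl 0) h1
  | grade1 i =>
      have h1 : FreeAlgebra.ι K i ∈ (V K) ^ 1 := by
        rw [pow_one]; exact Submodule.subset_span ⟨i, rfl⟩
      exact pow_le_Dn (by omega) h1
  | mul a b ha hb => exact mul_mem_Dn (m := 0) (n := 0) ha hb
  | add a b ha hb => exact Submodule.add_mem _ ha hb

lemma Dn_antitone {m n : ℕ} (h : n ≤ m) : Dn K m ≤ Dn K n := by
  refine iSup_le fun k => ?_
  exact pow_le_Dn (by omega)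

lemma mem_Dn_of_mul_left {n : ℕ} (a : FreeAlgebra K (Fin 2)) {x} (hx : x ∈ Dn K n) :
    a * x ∈ Dn K n := by
  have := mul_mem_Dn (m := 0) (n := n) (mem_Dn_zero a) hx
  rwa [zero_add] at this

lemma mem_Dn_of_mul_right {n : ℕ} (b : FreeAlgebra K (Fin 2)) {x} (hx : x ∈ Dn K n) :
    x * b ∈ Dn K n := by
  have := mul_mem_Dn (m := n) (n := 0) hx (mem_Dn_zero b)
  rwa [add_zero] at this

/-- decomposition of an arbitrary element as scalar + augmentation-ideal part -/
lemma exists_decomp (a : FreeAlgebra K (Fin 2)) :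
    ∃ (c : K) (a' : FreeAlgebra K (Fin 2)), a' ∈ Dn K 1 ∧ a = c • 1 + a' := by
  have h : a ∈ Submodule.span K {(1 : FreeAlgebra K (Fin 2))} ⊔ Dn K 1 := by
    have : Dn K 0 ≤ Submodule.span K {(1 : FreeAlgebra K (Fin 2))} ⊔ Dn K 1 := by
      refine iSup_le fun k => ?_
      rcases Nat.eq_zero_or_pos k with hk | hk
      · subst hk
        rw [Nat.zero_add, pow_zero, Submodule.one_eq_span]
        exact le_sup_left
      · exact le_trans (pow_le_Dn (by omega)) le_sup_right
    exact this (mem_Dn_zero a)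
  rcases Submodule.mem_sup.1 h with ⟨y, hy, z, hz, rfl⟩
  rcases Submodule.mem_span_singleton.1 hy with ⟨c, rfl⟩
  exact ⟨c, z, hz, rfl⟩

section IdealGen

variable {S : Set (FreeAlgebra K (Fin 2))}

lemma idealGen_mem {s : FreeAlgebra K (Fin 2)} (hs : s ∈ S) (a b : FreeAlgebra K (Fin 2)) :
    a * s * b ∈ idealGen K 2 S :=
  Submodule.subset_span ⟨a, s, b, hs, rfl⟩

lemma idealGen_self {s : FreeAlgebra K (Fin 2)} (hs : s ∈ S) : s ∈ idealGen K 2 S := by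
  have := idealGen_mem hs 1 1
  simpa using this

lemma idealGen_mul_left (r : FreeAlgebra K (Fin 2)) {x} (hx : x ∈ idealGen K 2 S) :
    r * x ∈ idealGen K 2 S := by
  induction hx using Submodule.span_induction with
  | mem x hxx =>
      obtain ⟨a, s, b, hs, rfl⟩ := hxx
      have : r * (a * s * b) = (r * a) * s * b := by simp only [mul_assoc]
      rw [this]
      exact idealGen_mem hs _ _
  | zero => simpa using Submodule.zero_mem _
  | add x y hx hy ihx ihy => rw [mul_add]; exact Submodule.add_mem _ ihx ihy
  | smul a x hx ih => rw [mul_smul_comm]; exact Submodule.smul_mem _ _ ih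

lemma idealGen_mul_right (r : FreeAlgebra K (Fin 2)) {x} (hx : x ∈ idealGen K 2 S) :
    x * r ∈ idealGen K 2 S := by
  induction hx using Submodule.span_induction with
  | mem x hxx =>
      obtain ⟨a, s, b, hs, rfl⟩ := hxx
      have : a * s * b * r = a * s * (b * r) := by rw [mul_assoc]
      rw [this]
      exact idealGen_mem hs _ _
  | zero => simpa using Submodule.zero_mem _
  | add x y hx hy ihx ihy => rw [add_mul]; exact Submodule.add_mem _ ihx ihy
  | smul a x hx ih => rw [smul_mul_assoc]; exact Submodule.smul_mem _ _ ih

lemma idealGen_le_Dn2 (hS : S ⊆ (Dn K 2 : Submodule K (FreeAlgebra K (Fin 2)))) :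
    idealGen K 2 S ≤ Dn K 2 := by
  rw [idealGen, Submodule.span_le]
  rintro x ⟨a, s, b, hs, rfl⟩
  exact mem_Dn_of_mul_right b (mem_Dn_of_mul_left a (hS hs))

end IdealGen

section KeySpan

variable (f g : FreeAlgebra K (Fin 2))

/-- The error submodule `mI + Im`. -/
noncomputable def TT (I : Submodule K (FreeAlgebra K (Fin 2))) : Submodule K (FreeAlgebra K (Fin 2)) :=
  Dn K 1 * I ⊔ I * Dn K 1

lemma key_span :
    idealGen K 2 {f, g} ≤ Submodule.span K {f, g} ⊔ TT (idealGen K 2 {f, g}) := by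
  have hle : {x : FreeAlgebra K (Fin 2) | ∃ a s b : FreeAlgebra K (Fin 2), s ∈ ({f, g} : Set _) ∧ x = a * s * b} ⊆
      ↑(Submodule.span K {f, g} ⊔ TT (idealGen K 2 {f, g})) := by
    set I := idealGen K 2 {f, g} with hIdef
    rintro x ⟨a, s, b, hs, rfl⟩
    obtain ⟨ca, a', ha', rfl⟩ := exists_decomp a
    obtain ⟨cb, b', hb', rfl⟩ := exists_decomp b
    have hsI : s ∈ I := idealGen_self hs
    have expand : (ca • 1 + a') * s * (cb • 1 + b')
        = ((ca * cb) • s) + (ca • (s * b') + a' * (s * (cb • 1 + b'))) := by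
      rw [add_mul, add_mul, smul_mul_assoc, smul_mul_assoc, one_mul, mul_assoc, mul_add,
        mul_smul_comm, mul_one, smul_add]
      rw [add_assoc, smul_smul]
    rw [expand]
    refine Submodule.add_mem _ ?_ (Submodule.mem_sup_right ?_)
    · exact Submodule.mem_sup_left (Submodule.smul_mem _ _ (Submodule.subset_span hs))
    · refine Submodule.add_mem _ (Submodule.mem_sup_right ?_) (Submodule.mem_sup_left ?_)
      · exact Submodule.smul_mem _ _ (Submodule.mul_mem_mul hsI hb')
      · exact Submodule.mul_mem_mul ha' (idealGen_mul_right _ hsI)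
  exact Submodule.span_le.2 hle

end KeySpan

section Escalate

lemma TT_stable {I : Submodule K (FreeAlgebra K (Fin 2))}
    (hIl : ∀ (r : FreeAlgebra K (Fin 2)) {x}, x ∈ I → r * x ∈ I)
    (hIr : ∀ (r : FreeAlgebra K (Fin 2)) {x}, x ∈ I → x * r ∈ I)
    (a b : FreeAlgebra K (Fin 2)) {w} (hw : w ∈ TT I) : a * w * b ∈ TT I := by
  rcases Submodule.mem_sup.1 hw with ⟨u, hu, v, hv, rfl⟩
  have hu' : a * u * b ∈ Dn K 1 * I := by
    refine Submodule.mul_induction_on hu ?_ ?_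
    · intro m hm x hx
      have : a * (m * x) * b = (a * m) * (x * b) := by
        rw [mul_assoc, mul_assoc, mul_assoc]
      rw [this]
      exact Submodule.mul_mem_mul (mem_Dn_of_mul_left a hm) (hIr b hx)
    · intro x y hx hy
      have : a * (x + y) * b = a * x * b + a * y * b := by
        rw [mul_add, add_mul]
      rw [this]
      exact Submodule.add_mem _ hx hy
  have hv' : a * v * b ∈ I * Dn K 1 := by
    refine Submodule.mul_induction_on hv ?_ ?_
    · intro x hx m hm
      have : a * (x * m) * b = (a * x) * (m * b) := by
        rw [mul_assoc, mul_assoc, mul_assoc]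
      rw [this]
      exact Submodule.mul_mem_mul (hIl a hx) (mem_Dn_of_mul_right b hm)
    · intro x y hx hy
      have : a * (x + y) * b = a * x * b + a * y * b := by
        rw [mul_add, add_mul]
      rw [this]
      exact Submodule.add_mem _ hx hy
  have : a * (u + v) * b = a * u * b + a * v * b := by rw [mul_add, add_mul]
  rw [this]
  exact Submodule.add_mem _ (Submodule.mem_sup_left hu') (Submodule.mem_sup_right hv')

lemma TT_le {I J : Submodule K (FreeAlgebra K (Fin 2))} {n : ℕ}
    (hIJ : ∀ (r : FreeAlgebra K (Fin 2)) {x}, x ∈ J → r * x ∈ J ∧ x * r ∈ J)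
    (h : I ≤ J ⊔ Dn K n) : TT I ≤ J ⊔ Dn K (n + 1) := by
  refine sup_le ?_ ?_
  · refine Submodule.mul_le.2 fun m hm x hx => ?_
    rcases Submodule.mem_sup.1 (h hx) with ⟨y, hy, z, hz, rfl⟩
    rw [mul_add]
    refine Submodule.add_mem _ (Submodule.mem_sup_left ((hIJ m hy).1)) (Submodule.mem_sup_right ?_)
    have := mul_mem_Dn (m := 1) (n := n) hm hz
    rwa [add_comm] at this
  · refine Submodule.mul_le.2 fun x hx m hm => ?_
    rcases Submodule.mem_sup.1 (h hx) with ⟨y, hy, z, hz, rfl⟩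
    rw [add_mul]
    refine Submodule.add_mem _ (Submodule.mem_sup_left ((hIJ m hy).2)) (Submodule.mem_sup_right ?_)
    exact mul_mem_Dn (m := n) (n := 1) hz hm

lemma escalate (z f g : FreeAlgebra K (Fin 2))
    (hf : f ∈ idealGen K 2 {z, g} ⊔ TT (idealGen K 2 {f, g})) (n : ℕ) :
    idealGen K 2 {f, g} ≤ idealGen K 2 {z, g} ⊔ Dn K n := by
  induction n with
  | zero => exact fun x _ => Submodule.mem_sup_right (mem_Dn_zero x)
  | succ n ih =>
      set I := idealGen K 2 {f, g} with hI
      set I2 := idealGen K 2 {z, g} with hI2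
      have hTT : TT I ≤ I2 ⊔ Dn K (n + 1) :=
        TT_le (fun r x hx => ⟨idealGen_mul_left r hx, idealGen_mul_right r hx⟩) ih
      have hle : {x : FreeAlgebra K (Fin 2) | ∃ a s b : FreeAlgebra K (Fin 2),
          s ∈ ({f, g} : Set _) ∧ x = a * s * b} ⊆ ↑(I2 ⊔ Dn K (n + 1)) := by
        rintro x ⟨a, s, b, hs, rfl⟩
        rcases hs with hs | hs
        · subst hs
          rcases Submodule.mem_sup.1 hf with ⟨y, hy, w, hw, hfw⟩
          have : a * s * b = a * y * b + a * w * b := by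
            rw [← hfw, mul_add, add_mul]
          rw [this]
          refine Submodule.add_mem _ (Submodule.mem_sup_left ?_) ?_
          · exact idealGen_mul_right b (idealGen_mul_left a hy)
          · exact hTT (TT_stable (fun r _ hx => idealGen_mul_left r hx)
              (fun r _ hx => idealGen_mul_right r hx) a b hw)
        · subst hs
          exact Submodule.mem_sup_left (idealGen_mem (by simp) a b)
      exact Submodule.span_le.2 hle

end Escalate

section Conc

variable (K)
variable (A : Type*) [Ring A] [Algebra K A]

/-- `K`-linear coefficient map on polynomials over an algebra. -/
noncomputable def coeffL (j : ℕ) : Polynomial A →ₗ[K] A where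
  toFun p := p.coeff j
  map_add' p q := Polynomial.coeff_add p q j
  map_smul' c p := Polynomial.coeff_smul c p j

/-- Polynomials concentrated in degree `m`. -/
noncomputable def Cm (m : ℕ) : Submodule K (Polynomial A) :=
  ⨅ (j : ℕ) (_ : j ≠ m), LinearMap.ker (coeffL K A j)

variable {K A}

lemma mem_Cm {m : ℕ} {x : Polynomial A} :
    x ∈ Cm K A m ↔ ∀ j ≠ m, x.coeff j = 0 := by
  simp [Cm, Submodule.mem_iInf, LinearMap.mem_ker, coeffL, LinearMap.coe_mk, AddHom.coe_mk]

lemma Cm_mul {a b : ℕ} {x y : Polynomial A} (hx : x ∈ Cm K A a) (hy : y ∈ Cm K A b) :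
    x * y ∈ Cm K A (a + b) := by
  rw [mem_Cm] at hx hy ⊢
  intro j hj
  rw [Polynomial.coeff_mul]
  refine Finset.sum_eq_zero fun p hp => ?_
  rcases Finset.HasAntidiagonal.mem_antidiagonal.1 hp with h
  by_cases hpa : p.1 = a
  · have : p.2 ≠ b := fun hb => hj (by omega)
    rw [hy _ this, mul_zero]
  · rw [hx _ hpa, zero_mul]

lemma one_mem_Cm : (1 : Polynomial A) ∈ Cm K A 0 := by
  rw [mem_Cm]
  intro j hj
  simp [Polynomial.coeff_one, hj]

/-- Main concentration lemma: an algebra map sending generators to polynomials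
concentrated in degree 1 sends `Dn n` into "order `≥ n`" polynomials. -/
lemma conc {n : ℕ} (θ : FreeAlgebra K (Fin 2) →ₐ[K] Polynomial A)
    (hθ : ∀ i, θ (FreeAlgebra.ι K i) ∈ Cm K A 1) {x} (hx : x ∈ Dn K n) {j} (hj : j < n) :
    (θ x).coeff j = 0 := by
  have aux : ∀ (m : ℕ) (z : FreeAlgebra K (Fin 2)), z ∈ (V K) ^ m → θ z ∈ Cm K A m := by
    intro m
    induction m with
    | zero =>
        intro z hz
        rw [pow_zero, Submodule.one_eq_span] at hz
        rcases Submodule.mem_span_singleton.1 hz with ⟨c, rfl⟩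
        rw [map_smul, map_one]
        exact Submodule.smul_mem _ _ one_mem_Cm
    | succ m ih =>
        intro z hz
        rw [pow_succ] at hz
        refine Submodule.mul_induction_on hz ?_ ?_
        · intro u hu v hv
          rw [map_mul]
          refine Cm_mul (ih u hu) ?_
          refine Submodule.span_induction ?_ ?_ ?_ ?_ hv
          · rintro w ⟨i, rfl⟩
            exact hθ i
          · rw [map_zero]; exact Submodule.zero_mem _
          · intro p q hp hq ihp ihq
            rw [map_add]; exact Submodule.add_mem _ ihp ihq
          · intro c p hp ihp
            rw [map_smul]; exact Submodule.smul_mem _ _ ihp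
        · intro p q hp hq
          rw [map_add]; exact Submodule.add_mem _ hp hq
  have : (θ x) ∈ ⨅ (j : ℕ) (_ : j < n), LinearMap.ker (coeffL K A j) := by
    refine Submodule.iSup_induction (motive := fun z => θ z ∈ ⨅ (j : ℕ) (_ : j < n), LinearMap.ker (coeffL K A j)) _ hx ?_ ?_ ?_
    · intro k z hz
      have := aux (k + n) z hz
      simp only [Submodule.mem_iInf, LinearMap.mem_ker]
      intro i hi
      exact (mem_Cm.1 this) i (by omega)
    · show θ 0 ∈ _
      rw [map_zero]; exact Submodule.zero_mem _
    · intro p q hp hq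
      show θ (p + q) ∈ _
      rw [map_add]; exact Submodule.add_mem _ hp hq
  simp only [Submodule.mem_iInf, LinearMap.mem_ker] at this
  exact this j hj

end Conc

section CommutatorNonzero

/-- The commutator of the two generators. -/
noncomputable def cc : FreeAlgebra K (Fin 2) :=
  FreeAlgebra.ι K 0 * FreeAlgebra.ι K 1 - FreeAlgebra.ι K 1 * FreeAlgebra.ι K 0

lemma cc_ne_zero : (cc : FreeAlgebra K (Fin 2)) ≠ 0 := by
  intro h
  set ψ := FreeAlgebra.lift K
    (fun i : Fin 2 => if i = 0 then (!![0,1;0,0] : Matrix (Fin 2) (Fin 2) K) else !![0,0;1,0])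
    with hψdef
  have hψ : ψ (cc : FreeAlgebra K (Fin 2)) = 0 := by rw [h, map_zero]
  rw [cc, map_sub, map_mul, map_mul, hψdef, FreeAlgebra.lift_ι_apply,
    FreeAlgebra.lift_ι_apply] at hψ
  simp only [if_pos rfl, if_neg (show (1 : Fin 2) ≠ 0 by decide)] at hψ
  have h00 := congrFun (congrFun hψ 0) 0
  simp [Matrix.mul_apply, Fin.sum_univ_two, Matrix.sub_apply] at h00

/-- The degree-two extraction map. -/
noncomputable def Φ : FreeAlgebra K (Fin 2) →ₐ[K] Polynomial (FreeAlgebra K (Fin 2)) :=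
  FreeAlgebra.lift K fun i => Polynomial.X * Polynomial.C (FreeAlgebra.ι K i)

lemma Φ_ι (i : Fin 2) : Φ (FreeAlgebra.ι K i) = Polynomial.monomial 1 (FreeAlgebra.ι K i) := by
  rw [Φ, FreeAlgebra.lift_ι_apply, Polynomial.X_mul, ← pow_one (Polynomial.X : Polynomial (FreeAlgebra K (Fin 2))),
    Polynomial.C_mul_X_pow_eq_monomial]

lemma Φ_ι_mem (i : Fin 2) : Φ (FreeAlgebra.ι K i) ∈ Cm K (FreeAlgebra K (Fin 2)) 1 := by
  rw [Φ_ι, mem_Cm]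
  intro j hj
  rw [Polynomial.coeff_monomial, if_neg (fun h => hj h.symm)]

lemma cc_not_mem_Dn3 : (cc : FreeAlgebra K (Fin 2)) ∉ Dn K 3 := by
  intro h
  have h2 : (Φ (cc : FreeAlgebra K (Fin 2))).coeff 2 = cc := by
    rw [cc, map_sub, map_mul, map_mul, Φ_ι, Φ_ι, Polynomial.monomial_mul_monomial,
      Polynomial.monomial_mul_monomial]
    rw [Polynomial.coeff_sub, Polynomial.coeff_monomial, Polynomial.coeff_monomial]
    simp
  have h0 := conc Φ Φ_ι_mem h (j := 2) (by omega)
  rw [h2] at h0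
  exact cc_ne_zero h0

end CommutatorNonzero

section Abelianization

open MvPolynomial

variable (K)

/-- The abelianization map. -/
noncomputable def piAb : FreeAlgebra K (Fin 2) →ₐ[K] MvPolynomial (Fin 2) K :=
  FreeAlgebra.lift K fun i => MvPolynomial.X i

/-- The scaling map used to extract homogeneous components. -/
noncomputable def ΨM : MvPolynomial (Fin 2) K →ₐ[K] Polynomial (MvPolynomial (Fin 2) K) :=
  MvPolynomial.aeval fun i => Polynomial.X * Polynomial.C (MvPolynomial.X i)

/-- The `j`-th homogeneous component, via the scaling map. -/
noncomputable def lcomp (j : ℕ) : MvPolynomial (Fin 2) K →ₗ[K] MvPolynomial (Fin 2) K :=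
  (coeffL K (MvPolynomial (Fin 2) K) j).comp (ΨM K).toLinearMap

variable {K}

lemma lcomp_apply (j : ℕ) (p : MvPolynomial (Fin 2) K) :
    lcomp K j p = (ΨM K p).coeff j := rfl

lemma ΨM_X (s : Fin 2) : ΨM K (X s) = Polynomial.X * Polynomial.C (X s) := by
  rw [ΨM, aeval_X]

lemma ΨM_X_pow (s : Fin 2) (i : ℕ) :
    ΨM K ((X s : MvPolynomial (Fin 2) K) ^ i) = Polynomial.monomial i ((X s : MvPolynomial (Fin 2) K) ^ i) := by
  rw [map_pow, ΨM_X, mul_pow, ← Polynomial.C_pow, mul_comm, Polynomial.C_mul_X_pow_eq_monomial]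

lemma lcomp_X_pow (s : Fin 2) (i j : ℕ) :
    lcomp K j ((X s : MvPolynomial (Fin 2) K) ^ i)
      = if j = i then (X s : MvPolynomial (Fin 2) K) ^ i else 0 := by
  rw [lcomp_apply, ΨM_X_pow, Polynomial.coeff_monomial]
  by_cases h : j = i
  · simp [h]
  · rw [if_neg (fun hh : i = j => h hh.symm), if_neg h]

lemma eval_one_ΨM (p : MvPolynomial (Fin 2) K) : Polynomial.eval 1 (ΨM K p) = p := by
  induction p using MvPolynomial.induction_on with
  | C a => simp [ΨM, algebraMap_eq]
  | add p q hp hq => rw [map_add, Polynomial.eval_add, hp, hq]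
  | mul_X p i hp => rw [map_mul, Polynomial.eval_mul, hp, ΨM_X]; simp

lemma exists_lcomp_ne_zero {p : MvPolynomial (Fin 2) K} (hp : p ≠ 0) :
    ∃ j, lcomp K j p ≠ 0 := by
  by_contra hcon
  push_neg at hcon
  apply hp
  have hΨ : ΨM K p = 0 := Polynomial.ext fun j => by
    have := hcon j
    rwa [lcomp_apply] at this
  rw [← eval_one_ΨM p, hΨ, Polynomial.eval_zero]

lemma lcomp_mul (p q : MvPolynomial (Fin 2) K) (n : ℕ) :
    lcomp K n (p * q) = ∑ ij ∈ Finset.HasAntidiagonal.antidiagonal n, lcomp K ij.1 p * lcomp K ij.2 q := by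
  simp only [lcomp_apply, map_mul, Polynomial.coeff_mul]

variable (K)

/-- "order at least n" submodule of the polynomial ring. -/
noncomputable def Gp (n : ℕ) : Submodule K (MvPolynomial (Fin 2) K) :=
  ⨅ (j : ℕ) (_ : j < n), LinearMap.ker (lcomp K j)

variable {K}

lemma mem_Gp {n : ℕ} {p : MvPolynomial (Fin 2) K} :
    p ∈ Gp K n ↔ ∀ j < n, lcomp K j p = 0 := by
  simp [Gp, Submodule.mem_iInf, LinearMap.mem_ker]

lemma piAb_Dn_le_Gp {n : ℕ} {x : FreeAlgebra K (Fin 2)} (hx : x ∈ Dn K n) :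
    piAb K x ∈ Gp K n := by
  rw [mem_Gp]
  intro j hj
  have hθ : ∀ i : Fin 2, ((ΨM K).comp (piAb K)) (FreeAlgebra.ι K i)
      ∈ Cm K (MvPolynomial (Fin 2) K) 1 := by
    intro i
    rw [AlgHom.comp_apply, piAb, FreeAlgebra.lift_ι_apply, ΨM_X, mul_comm,
      ← pow_one (Polynomial.X : Polynomial (MvPolynomial (Fin 2) K)),
      Polynomial.C_mul_X_pow_eq_monomial, mem_Cm]
    intro j hj
    rw [Polynomial.coeff_monomial, if_neg fun h => hj h.symm]
  have := conc ((ΨM K).comp (piAb K)) hθ hx hj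
  rwa [AlgHom.comp_apply, ← lcomp_apply] at this

lemma piAb_surjective : Function.Surjective (piAb K) := by
  rw [← AlgHom.range_eq_top, eq_top_iff, ← MvPolynomial.adjoin_range_X]
  refine Algebra.adjoin_le ?_
  rintro x ⟨i, rfl⟩
  exact ⟨FreeAlgebra.ι K i, by simp [piAb, FreeAlgebra.lift_ι_apply]⟩

lemma piAb_cc : piAb K (cc : FreeAlgebra K (Fin 2)) = 0 := by
  rw [cc, map_sub, map_mul, map_mul, piAb, FreeAlgebra.lift_ι_apply, FreeAlgebra.lift_ι_apply,
    mul_comm, sub_self]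

lemma piAb_idealGen_le {g : FreeAlgebra K (Fin 2)} :
    Submodule.map (piAb K).toLinearMap (idealGen K 2 {cc, g})
      ≤ LinearMap.range (LinearMap.mulRight K (piAb K g)) := by
  rw [idealGen, Submodule.map_span, Submodule.span_le]
  rintro y ⟨x, ⟨a, s, b, hs, rfl⟩, rfl⟩
  rcases hs with hs | hs
  · subst hs
    simp only [AlgHom.toLinearMap_apply, map_mul, piAb_cc, mul_zero, zero_mul]
    exact Submodule.zero_mem _
  · subst hs
    refine ⟨piAb K a * piAb K b, ?_⟩
    simp only [AlgHom.toLinearMap_apply, map_mul, LinearMap.mulRight_apply]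
    ring

lemma constantCoeff_lcomp {e : ℕ} (he : e ≠ 0) (p : MvPolynomial (Fin 2) K) :
    constantCoeff (lcomp K e p) = 0 := by
  have key : (Polynomial.mapRingHom (constantCoeff (σ := Fin 2) (R := K))).comp
      (ΨM K).toRingHom = (Polynomial.C (R := K)).comp (constantCoeff) := by
    refine MvPolynomial.ringHom_ext (fun r => ?_) (fun i => ?_)
    · simp [ΨM, algebraMap_eq]
    · simp [ΨM_X]
  have h2 : Polynomial.map (constantCoeff (σ := Fin 2) (R := K)) (ΨM K p)
      = Polynomial.C (constantCoeff p) := by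
    have := congrArg (fun f => (f : MvPolynomial (Fin 2) K →+* Polynomial K) p) key
    simpa using this
  have h3 := congrArg (fun q => Polynomial.coeff q e) h2
  simp only [Polynomial.coeff_map, Polynomial.coeff_C, if_neg he] at h3
  rwa [lcomp_apply]

lemma prime_X2 (s : Fin 2) : Prime (X s : MvPolynomial (Fin 2) K) := by
  have h0 : Prime (X 0 : MvPolynomial (Fin 2) K) := by
    rw [← MulEquiv.prime_iff (MvPolynomial.finSuccEquiv K 1).toMulEquiv]
    have : (MvPolynomial.finSuccEquiv K 1).toMulEquiv (X 0)
        = (Polynomial.X : Polynomial (MvPolynomial (Fin 1) K)) := by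
      simpa using MvPolynomial.finSuccEquiv_X_zero (R := K) (n := 1)
    rw [this]
    exact Polynomial.prime_X
  have h1 : Prime (X 1 : MvPolynomial (Fin 2) K) := by
    rw [← MulEquiv.prime_iff (MvPolynomial.renameEquiv K (Equiv.swap (0 : Fin 2) 1)).toMulEquiv]
    have : (MvPolynomial.renameEquiv K (Equiv.swap (0 : Fin 2) 1)).toMulEquiv (X 1)
        = (X 0 : MvPolynomial (Fin 2) K) := by
      simp [MvPolynomial.renameEquiv]
    rw [this]
    exact h0
  fin_cases s
  · exact h0
  · exact h1

end Abelianization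

section Endgame

open MvPolynomial

lemma lcomp_mul_low {a h : MvPolynomial (Fin 2) K} {r e : ℕ}
    (hra : ∀ i < r, lcomp K i a = 0) (heh : ∀ j < e, lcomp K j h = 0) :
    lcomp K (r + e) (a * h) = lcomp K r a * lcomp K e h := by
  rw [lcomp_mul]
  refine Finset.sum_eq_single (r, e) ?_ ?_
  · rintro ⟨i, j⟩ hmem hne
    have hij : i + j = r + e := Finset.HasAntidiagonal.mem_antidiagonal.1 hmem
    rcases lt_trichotomy i r with hlt | heq | hgt
    · rw [hra i hlt, zero_mul]
    · exfalso; exact hne (by simp [heq]; omega)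
    · have : j < e := by omega
      rw [heh j this, mul_zero]
  · intro hnot
    exact absurd ((Finset.HasAntidiagonal.mem_antidiagonal (n := r + e)).2 rfl) hnot

lemma lcomp_mul_low0 {a h : MvPolynomial (Fin 2) K} {r e n : ℕ}
    (hra : ∀ i < r, lcomp K i a = 0) (heh : ∀ j < e, lcomp K j h = 0) (hn : n < r + e) :
    lcomp K n (a * h) = 0 := by
  rw [lcomp_mul]
  refine Finset.sum_eq_zero ?_
  rintro ⟨i, j⟩ hmem
  have hij : i + j = n := Finset.HasAntidiagonal.mem_antidiagonal.1 hmem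
  rcases lt_or_ge i r with hlt | hge
  · rw [hra i hlt, zero_mul]
  · have : j < e := by omega
    rw [heh j this, mul_zero]

lemma exists_low_elem (J : Submodule K (MvPolynomial (Fin 2) K))
    (hfd : FiniteDimensional K (MvPolynomial (Fin 2) K ⧸ J)) (s : Fin 2) :
    ∃ (d : ℕ) (κ : K) (v : MvPolynomial (Fin 2) K), v ∈ J ∧ κ ≠ 0 ∧
      lcomp K d v = κ • (X s : MvPolynomial (Fin 2) K) ^ d ∧ ∀ j < d, lcomp K j v = 0 := by
  classical
  set Q := MvPolynomial (Fin 2) K ⧸ J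
  set N := Module.finrank K Q + 1 with hN
  set vfun : Fin N → Q := fun i => Submodule.Quotient.mk ((X s : MvPolynomial (Fin 2) K) ^ (i : ℕ))
    with hvfun
  have hnli : ¬ LinearIndependent K vfun := by
    intro hli
    have := hli.fintype_card_le_finrank
    simp only [Fintype.card_fin] at this
    omega
  rw [Fintype.not_linearIndependent_iff] at hnli
  obtain ⟨g, hsum, i0, hgi0⟩ := hnli
  set v : MvPolynomial (Fin 2) K := ∑ i : Fin N, g i • (X s : MvPolynomial (Fin 2) K) ^ (i : ℕ)
    with hv
  have hvJ : v ∈ J := by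
    rw [← Submodule.Quotient.mk_eq_zero]
    have : (Submodule.Quotient.mk v : Q) = ∑ i : Fin N, g i • vfun i := by
      rw [hv, hvfun]
      simp only [← Submodule.Quotient.mk_smul]
      exact map_sum (Submodule.mkQ J) (fun i => g i • (X s : MvPolynomial (Fin 2) K) ^ (i:ℕ))
        Finset.univ
    rw [this, hsum]
  set dset := Finset.univ.filter (fun i : Fin N => g i ≠ 0) with hdset
  have hdne : dset.Nonempty := ⟨i0, by simp [hdset, hgi0]⟩
  set d0 := dset.min' hdne with hd0
  have hgd0 : g d0 ≠ 0 := (Finset.mem_filter.1 (dset.min'_mem hdne)).2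
  have hlcomp : ∀ j : ℕ, lcomp K j v =
      ∑ i : Fin N, g i • (if j = (i : ℕ) then (X s : MvPolynomial (Fin 2) K) ^ (i:ℕ) else 0) := by
    intro j
    rw [hv, map_sum]
    refine Finset.sum_congr rfl fun i _ => ?_
    rw [map_smul, lcomp_X_pow]
  refine ⟨(d0 : ℕ), g d0, v, hvJ, hgd0, ?_, ?_⟩
  · rw [hlcomp]
    rw [Finset.sum_eq_single d0]
    · rw [if_pos rfl]
    · intro i _ hne
      rw [if_neg, smul_zero]
      intro hcast
      exact hne (Fin.ext hcast.symm)
    · intro habs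
      exact absurd (Finset.mem_univ d0) habs
  · intro j hj
    rw [hlcomp]
    refine Finset.sum_eq_zero fun i _ => ?_
    by_cases hji : j = (i : ℕ)
    · subst hji
      have hginz : g i = 0 := by
        by_contra hgi
        have : i ∈ dset := by simp [hdset, hgi]
        have := dset.min'_le i this
        have : (d0 : ℕ) ≤ (i : ℕ) := this
        omega
      rw [hginz, zero_smul]
    · rw [if_neg hji, smul_zero]

lemma endgame (g : FreeAlgebra K (Fin 2)) (hg2 : g ∈ Dn K 2)
    (J : Submodule K (MvPolynomial (Fin 2) K))
    (hJ : ∀ n : ℕ, J ≤ LinearMap.range (LinearMap.mulRight K (piAb K g)) ⊔ Gp K n)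
    (hfd : FiniteDimensional K (MvPolynomial (Fin 2) K ⧸ J)) : False := by
  classical
  set h := piAb K g with hhdef
  have hh : ∀ j < 2, lcomp K j h = 0 := fun j hj => (mem_Gp.1 (piAb_Dn_le_Gp hg2)) j hj
  have key : ∀ s : Fin 2, ∃ (d : ℕ) (a : MvPolynomial (Fin 2) K) (κ : K), κ ≠ 0 ∧
      (∀ j < d, lcomp K j (a * h) = 0) ∧
      lcomp K d (a * h) = κ • (X s : MvPolynomial (Fin 2) K) ^ d := by
    intro s
    obtain ⟨d, κ, v, hvJ, hκ, hvd, hvlow⟩ := exists_low_elem J hfd s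
    have hv' := (hJ (d + 1)) hvJ
    rcases Submodule.mem_sup.1 hv' with ⟨u, hu, w, hw, huw⟩
    obtain ⟨a, ha⟩ := hu
    rw [LinearMap.mulRight_apply] at ha
    have hwlow : ∀ j ≤ d, lcomp K j w = 0 := fun j hj => (mem_Gp.1 hw) j (by omega)
    have hcomp : ∀ j ≤ d, lcomp K j (a * h) = lcomp K j v := by
      intro j hj
      have : v = a * h + w := by rw [ha, huw]
      rw [this, map_add, hwlow j hj, add_zero]
    exact ⟨d, a, κ, hκ, fun j hj => by rw [hcomp j (le_of_lt hj)]; exact hvlow j hj,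
      by rw [hcomp d le_rfl]; exact hvd⟩
  by_cases hh0 : h = 0
  · obtain ⟨d, a, κ, hκ, _, hd⟩ := key 0
    rw [hh0, mul_zero, map_zero] at hd
    exact (smul_ne_zero hκ (pow_ne_zero _ (MvPolynomial.X_ne_zero 0))) hd.symm
  · obtain ⟨e, he, hemin⟩ : ∃ e : ℕ, lcomp K e h ≠ 0 ∧ ∀ j < e, lcomp K j h = 0 := by
      obtain ⟨j, hj⟩ := exists_lcomp_ne_zero hh0
      exact ⟨Nat.find ⟨j, hj⟩, Nat.find_spec (⟨j, hj⟩ : ∃ j, lcomp K j h ≠ 0),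
        fun i hi => not_not.1 (Nat.find_min (⟨j, hj⟩ : ∃ j, lcomp K j h ≠ 0) hi)⟩
    have he2 : 2 ≤ e := by
      by_contra hcon
      push_neg at hcon
      exact he (hh e hcon)
    have dvd : ∀ s : Fin 2, ∃ m : ℕ, lcomp K e h ∣ (X s : MvPolynomial (Fin 2) K) ^ m := by
      intro s
      obtain ⟨d, a, κ, hκ, hlow, hd⟩ := key s
      have hXd : (κ • (X s : MvPolynomial (Fin 2) K) ^ d) ≠ 0 :=
        smul_ne_zero hκ (pow_ne_zero _ (MvPolynomial.X_ne_zero s))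
      have ha0 : a ≠ 0 := by
        rintro rfl
        rw [zero_mul, map_zero] at hd
        exact hXd hd.symm
      obtain ⟨r, hr, hrmin⟩ : ∃ r : ℕ, lcomp K r a ≠ 0 ∧ ∀ i < r, lcomp K i a = 0 := by
        obtain ⟨j, hj⟩ := exists_lcomp_ne_zero ha0
        exact ⟨Nat.find ⟨j, hj⟩, Nat.find_spec (⟨j, hj⟩ : ∃ j, lcomp K j a ≠ 0),
          fun i hi => not_not.1 (Nat.find_min (⟨j, hj⟩ : ∃ j, lcomp K j a ≠ 0) hi)⟩
      rcases lt_trichotomy (r + e) d with hlt | heq | hgt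
      · exfalso
        have h1 := hlow (r + e) hlt
        rw [lcomp_mul_low hrmin hemin] at h1
        exact mul_ne_zero hr he h1
      · subst heq
        rw [lcomp_mul_low hrmin hemin] at hd
        have hcalc : lcomp K e h * (κ⁻¹ • lcomp K r a)
            = κ⁻¹ • (lcomp K r a * lcomp K e h) := by
          rw [mul_smul_comm, mul_comm]
        rw [hd, smul_smul, inv_mul_cancel₀ hκ, one_smul] at hcalc
        exact ⟨r + e, ⟨κ⁻¹ • lcomp K r a, hcalc.symm⟩⟩
      · exfalso
        have h1 := lcomp_mul_low0 hrmin hemin hgt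
        rw [hd] at h1
        exact hXd h1
    obtain ⟨m0, hm0⟩ := dvd 0
    obtain ⟨m1, hm1⟩ := dvd 1
    have hconst : constantCoeff (lcomp K e h) = 0 := constantCoeff_lcomp (by omega) h
    have hnotunit : ¬ IsUnit (lcomp K e h) := by
      intro hu
      have := hu.map (constantCoeff (σ := Fin 2) (R := K))
      rw [hconst] at this
      exact not_isUnit_zero this
    have hXdvd : ∀ (s : Fin 2) (m : ℕ), lcomp K e h ∣ (X s : MvPolynomial (Fin 2) K) ^ m →
        (X s : MvPolynomial (Fin 2) K) ∣ lcomp K e h := by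
      intro s m hdvd
      obtain ⟨i, him, hassoc⟩ := (dvd_prime_pow (prime_X2 s) m).1 hdvd
      rcases Nat.eq_zero_or_pos i with hi0 | hip
      · exfalso
        subst hi0
        rw [pow_zero] at hassoc
        exact hnotunit (associated_one_iff_isUnit.1 hassoc)
      · exact dvd_trans (dvd_pow_self _ (by omega)) hassoc.symm.dvd
    have hX0 : (X 0 : MvPolynomial (Fin 2) K) ∣ lcomp K e h := hXdvd 0 m0 hm0
    have hX01 : (X 0 : MvPolynomial (Fin 2) K) ∣ (X 1 : MvPolynomial (Fin 2) K) :=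
      (prime_X2 0).dvd_of_dvd_pow (dvd_trans hX0 hm1)
    obtain ⟨t, ht⟩ := hX01
    have := congrArg (MvPolynomial.eval (fun j : Fin 2 => if j = 0 then (0 : K) else 1)) ht
    simp only [MvPolynomial.eval_X, MvPolynomial.eval_mul] at this
    simp only [if_true, zero_mul] at this
    exact one_ne_zero this

end Endgame

section Final

lemma caseB (f g : FreeAlgebra K (Fin 2)) (hg2 : g ∈ Dn K 2)
    (hfin : FiniteDimensional K (FreeAlgebra K (Fin 2) ⧸ idealGen K 2 {f, g}))
    (hf : f ∈ idealGen K 2 {(cc : FreeAlgebra K (Fin 2)), g} ⊔ TT (idealGen K 2 {f, g})) :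
    False := by
  set I := idealGen K 2 {f, g} with hIdef
  set J := Submodule.map (piAb K).toLinearMap I with hJdef
  have hJ : ∀ n : ℕ, J ≤ LinearMap.range (LinearMap.mulRight K (piAb K g)) ⊔ Gp K n := by
    intro n
    have hesc := escalate (cc : FreeAlgebra K (Fin 2)) f g hf n
    have h1 : J ≤ Submodule.map (piAb K).toLinearMap
        (idealGen K 2 {(cc : FreeAlgebra K (Fin 2)), g} ⊔ Dn K n) :=
      Submodule.map_mono hesc
    rw [Submodule.map_sup] at h1
    refine le_trans h1 (sup_le_sup piAb_idealGen_le ?_)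
    exact Submodule.map_le_iff_le_comap.2 fun x hx => piAb_Dn_le_Gp hx
  have hfd : FiniteDimensional K (MvPolynomial (Fin 2) K ⧸ J) := by
    have hle : I ≤ Submodule.comap (piAb K).toLinearMap J :=
      fun x hx => Submodule.mem_comap.2 (Submodule.mem_map_of_mem hx)
    let L : (FreeAlgebra K (Fin 2) ⧸ I) →ₗ[K] (MvPolynomial (Fin 2) K ⧸ J) :=
      Submodule.mapQ I J (piAb K).toLinearMap hle
    have hsurj : Function.Surjective L := by
      intro y
      obtain ⟨p, rfl⟩ := Submodule.Quotient.mk_surjective J y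
      obtain ⟨x, rfl⟩ := piAb_surjective p
      exact ⟨Submodule.Quotient.mk x, by simp [L, Submodule.mapQ_apply]⟩
    exact Module.Finite.of_surjective L hsurj
  exact endgame g hg2 J hJ hfd

end Final

end DWaux

open DWaux in
/-- Donovan–Wemyss question (Theorem 1.2, case `n = 2`): if `f₁, f₂` are elements of
the free algebra on two generators, each a sum of words of degree two or higher, and
the quotient by the two-sided ideal `I = (f₁, f₂)` is finite dimensional over `K`,
then the quotient is not commutative: some commutator lies outside `I`. -/
theorem stmt13 {K : Type*} [Field K] (f₁ f₂ : FreeAlgebra K (Fin 2))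
    (h₁ : f₁ ∈ degGe2 K 2) (h₂ : f₂ ∈ degGe2 K 2)
    (I : Submodule K (FreeAlgebra K (Fin 2)))
    (hI : I = idealGen K 2 {f₁, f₂})
    (hfin : FiniteDimensional K (FreeAlgebra K (Fin 2) ⧸ I)) :
    ∃ a b : FreeAlgebra K (Fin 2), a * b - b * a ∉ I := by
  subst hI
  by_contra hcon
  push_neg at hcon
  have h1' : f₁ ∈ Dn K 2 := h₁
  have h2' : f₂ ∈ Dn K 2 := h₂
  have hccI : (cc : FreeAlgebra K (Fin 2)) ∈ idealGen K 2 {f₁, f₂} :=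
    hcon (FreeAlgebra.ι K 0) (FreeAlgebra.ι K 1)
  have hccTT := key_span f₁ f₂ hccI
  rcases Submodule.mem_sup.1 hccTT with ⟨y, hy, w, hw, hyw⟩
  rcases Submodule.mem_span_pair.1 hy with ⟨α, β, hαβ⟩
  by_cases hα : α = 0
  · by_cases hβ : β = 0
    · -- case A : the commutator lies in degree ≥ 3, contradiction
      have hy0 : y = 0 := by rw [← hαβ, hα, hβ, zero_smul, zero_smul, add_zero]
      have hccw : (cc : FreeAlgebra K (Fin 2)) = w := by rw [← hyw, hy0, zero_add]
      have hI2 : idealGen K 2 {f₁, f₂} ≤ Dn K 2 := by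
        refine idealGen_le_Dn2 ?_
        rintro x (rfl | rfl)
        · exact h1'
        · exact h2'
      have hTT3 : TT (idealGen K 2 {f₁, f₂}) ≤ Dn K 3 := by
        refine sup_le ?_ ?_
        · refine Submodule.mul_le.2 fun m hm x hx => ?_
          exact mul_mem_Dn (m := 1) (n := 2) hm (hI2 hx)
        · refine Submodule.mul_le.2 fun x hx m hm => ?_
          exact mul_mem_Dn (m := 2) (n := 1) (hI2 hx) hm
      exact cc_not_mem_Dn3 (hccw ▸ hTT3 hw)
    · -- case B with the roles of f₁ and f₂ swapped
      have hpair : ({f₁, f₂} : Set (FreeAlgebra K (Fin 2))) = {f₂, f₁} := Set.pair_comm f₁ f₂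
      refine caseB f₂ f₁ h1' (by rwa [← hpair]) ?_
      have hc1 : β⁻¹ • (cc : FreeAlgebra K (Fin 2))
          ∈ idealGen K 2 {(cc : FreeAlgebra K (Fin 2)), f₁} :=
        Submodule.smul_mem _ _ (idealGen_self (by simp))
      have hc3 : β⁻¹ • (α • f₁) ∈ idealGen K 2 {(cc : FreeAlgebra K (Fin 2)), f₁} :=
        Submodule.smul_mem _ _ (Submodule.smul_mem _ _ (idealGen_self (by simp)))
      have hc2 : β⁻¹ • w ∈ TT (idealGen K 2 {f₂, f₁}) := by
        rw [← hpair]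
        exact Submodule.smul_mem _ _ hw
      have heq : f₂ = (β⁻¹ • (cc : FreeAlgebra K (Fin 2)) - β⁻¹ • w) - β⁻¹ • (α • f₁) := by
        have hb : β • f₂ = cc - w - α • f₁ := by
          rw [← hyw, ← hαβ]
          abel
        calc f₂ = β⁻¹ • (β • f₂) := by rw [smul_smul, inv_mul_cancel₀ hβ, one_smul]
        _ = β⁻¹ • (cc - w - α • f₁) := by rw [hb]
        _ = (β⁻¹ • (cc : FreeAlgebra K (Fin 2)) - β⁻¹ • w) - β⁻¹ • (α • f₁) := by
            rw [smul_sub, smul_sub]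
      have hmem := Submodule.sub_mem _ (Submodule.sub_mem _ (Submodule.mem_sup_left hc1)
        (Submodule.mem_sup_right hc2)) (Submodule.mem_sup_left hc3)
      rwa [← heq] at hmem
  · -- case B
    refine caseB f₁ f₂ h2' hfin ?_
    have hc1 : α⁻¹ • (cc : FreeAlgebra K (Fin 2))
        ∈ idealGen K 2 {(cc : FreeAlgebra K (Fin 2)), f₂} :=
      Submodule.smul_mem _ _ (idealGen_self (by simp))
    have hc3 : α⁻¹ • (β • f₂) ∈ idealGen K 2 {(cc : FreeAlgebra K (Fin 2)), f₂} :=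
      Submodule.smul_mem _ _ (Submodule.smul_mem _ _ (idealGen_self (by simp)))
    have hc2 : α⁻¹ • w ∈ TT (idealGen K 2 {f₁, f₂}) := Submodule.smul_mem _ _ hw
    have heq : f₁ = (α⁻¹ • (cc : FreeAlgebra K (Fin 2)) - α⁻¹ • w) - α⁻¹ • (β • f₂) := by
      have hb : α • f₁ = cc - w - β • f₂ := by
        rw [← hyw, ← hαβ]
        abel
      calc f₁ = α⁻¹ • (α • f₁) := by rw [smul_smul, inv_mul_cancel₀ hα, one_smul]
      _ = α⁻¹ • (cc - w - β • f₂) := by rw [hb]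
      _ = (α⁻¹ • (cc : FreeAlgebra K (Fin 2)) - α⁻¹ • w) - α⁻¹ • (β • f₂) := by
          rw [smul_sub, smul_sub]
    have hmem := Submodule.sub_mem _ (Submodule.sub_mem _ (Submodule.mem_sup_left hc1)
      (Submodule.mem_sup_right hc2)) (Submodule.mem_sup_left hc3)
    rwa [← heq] at hmem
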